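/- The ICTL formula A(q R p) → p ∧ (q ∨ AX A(q R p)) is not valid: there exists a finite birelational model and a world at which it fails. -/

import Mathlib

/-- A birelational frame: a nonempty countable set of worlds with a preorder `P`
(the intuitionistic/knowledge order), a serial relation `R` (the temporal
transition relation), satisfying the confluence conditions C1 and C2. -/
structure BiFrame (W : Type) where
  nonempty : Nonempty W
  countable : Countable W
  P : W → W → Prop
  R : W → W → Prop
  P_refl : ∀ x, P x x
  P_trans : ∀ x y z, P x y → P y z → P x z
  R_serial : ∀ x, ∃ y, R x y
  C1 : ∀ x y z, R x y → P y z → ∃ u, P x u ∧ R u z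
  C2 : ∀ x y z, P x z → R x y → ∃ u, P y u ∧ R z u

/-- A path: an infinite `R`-sequence of worlds. -/
def BiFrame.IsPath {W : Type} (F : BiFrame W) (ρ : ℕ → W) : Prop :=
  ∀ i : ℕ, F.R (ρ i) (ρ (i + 1))

/-- A birelational model: a birelational frame with a P-monotone valuation. -/
structure BiModel (W : Type) (Atom : Type) extends BiFrame W where
  V : W → Set Atom
  V_mono : ∀ w w', P w w' → V w ⊆ V w'

/-- Formulae of Intuitionistic Computation Tree Logic. -/
inductive ICTL (Atom : Type) : Type where
  | atom : Atom → ICTL Atom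
  | bot  : ICTL Atom
  | and  : ICTL Atom → ICTL Atom → ICTL Atom
  | or   : ICTL Atom → ICTL Atom → ICTL Atom
  | impl : ICTL Atom → ICTL Atom → ICTL Atom
  | EX   : ICTL Atom → ICTL Atom
  | EU   : ICTL Atom → ICTL Atom → ICTL Atom
  | ER   : ICTL Atom → ICTL Atom → ICTL Atom
  | AX   : ICTL Atom → ICTL Atom
  | AU   : ICTL Atom → ICTL Atom → ICTL Atom
  | AR   : ICTL Atom → ICTL Atom → ICTL Atom

/-- Intuitionistic negation. -/
def ICTL.neg {Atom : Type} (φ : ICTL Atom) : ICTL Atom := ICTL.impl φ ICTL.bot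

/-- The ICTL satisfaction relation on birelational models. -/
def Sat {W Atom : Type} (M : BiModel W Atom) : ICTL Atom → W → Prop
  | .atom p, w => p ∈ M.V w
  | .bot, _ => False
  | .and φ ψ, w => Sat M φ w ∧ Sat M ψ w
  | .or φ ψ, w => Sat M φ w ∨ Sat M ψ w
  | .impl φ ψ, w => ∀ w', M.P w w' → Sat M φ w' → Sat M ψ w'
  | .EX φ, w => ∃ ρ : ℕ → W, M.toBiFrame.IsPath ρ ∧ ρ 0 = w ∧ Sat M φ (ρ 1)
  | .EU φ ψ, w => ∃ ρ : ℕ → W, M.toBiFrame.IsPath ρ ∧ ρ 0 = w ∧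
      ∃ j : ℕ, Sat M ψ (ρ j) ∧ ∀ i < j, Sat M φ (ρ i)
  | .ER φ ψ, w => ∃ ρ : ℕ → W, M.toBiFrame.IsPath ρ ∧ ρ 0 = w ∧
      ((∀ i : ℕ, Sat M ψ (ρ i)) ∨ ∃ j : ℕ, Sat M φ (ρ j) ∧ ∀ i ≤ j, Sat M ψ (ρ i))
  | .AX φ, w => ∀ w', M.P w w' → ∀ ρ : ℕ → W, M.toBiFrame.IsPath ρ → ρ 0 = w' →
      Sat M φ (ρ 1)
  | .AU φ ψ, w => ∀ w', M.P w w' → ∀ ρ : ℕ → W, M.toBiFrame.IsPath ρ → ρ 0 = w' →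
      ∃ j : ℕ, Sat M ψ (ρ j) ∧ ∀ i < j, Sat M φ (ρ i)
  | .AR φ ψ, w => ∀ w', M.P w w' → ∀ ρ : ℕ → W, M.toBiFrame.IsPath ρ → ρ 0 = w' →
      ((∀ i : ℕ, Sat M ψ (ρ i)) ∨ ∃ j : ℕ, Sat M φ (ρ j) ∧ ∀ i ≤ j, Sat M ψ (ρ i))

/-- The satisfaction set ⟦φ⟧ of a formula. -/
def sem {W Atom : Type} (M : BiModel W Atom) (φ : ICTL Atom) : Set W :=
  {w | Sat M φ w}

/-- `upset M Y = Y↑`: the worlds all of whose `P`-successors lie in `Y`. -/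
def upset {W Atom : Type} (M : BiModel W Atom) (Y : Set W) : Set W :=
  {w | ∀ w', M.P w w' → w' ∈ Y}

/-- Existential predecessors. -/
def preE {W Atom : Type} (M : BiModel W Atom) (X : Set W) : Set W :=
  {w' | ∃ w ∈ X, M.R w' w}

/-- Universal predecessors. -/
def preA {W Atom : Type} (M : BiModel W Atom) (X : Set W) : Set W :=
  {w' | ∀ w, M.R w' w → w ∈ X}

inductive Wd : Type | w1 | w2 | v1 | v2
deriving DecidableEq

instance : Fintype Wd := ⟨{.w1, .w2, .v1, .v2}, fun x => by cases x <;> simp⟩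

open Wd in
def prB : Wd → Wd → Bool
  | w1, w1 => true | w1, v1 => true
  | w2, w2 => true | w2, v1 => true
  | v1, v1 => true | v2, v2 => true
  | _, _ => false

open Wd in
def rB : Wd → Wd → Bool
  | w1, w2 => true | w2, w2 => true
  | v1, v1 => true | v1, v2 => true | v2, v2 => true
  | _, _ => false

open Wd in
def vB : Wd → Bool → Bool
  | w1, true => true
  | w2, _ => true
  | v1, _ => true
  | _, _ => false

def Mdl : BiModel Wd Bool where
  nonempty := ⟨.w1⟩
  countable := inferInstance
  P x y := prB x y = true
  R x y := rB x y = true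
  P_refl := by decide
  P_trans := by decide
  R_serial := by decide
  C1 := by decide
  C2 := by decide
  V w := {a | vB w a = true}
  V_mono := by
    intro w w' h a ha
    revert h ha
    cases w <;> cases w' <;> cases a <;> decide

lemma w1_path {ρ : ℕ → Wd} (hp : Mdl.toBiFrame.IsPath ρ) (h0 : ρ 0 = Wd.w1) :
    ∀ i, ρ (i + 1) = Wd.w2 := by
  intro i
  induction i with
  | zero =>
    have := hp 0
    rw [h0] at this
    revert this
    cases ρ 1 <;> simp [Mdl, rB]
  | succ n ih =>
    have := hp (n + 1)
    rw [ih] at this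
    revert this
    cases ρ (n + 2) <;> simp [Mdl, rB]

/-- `A(q R p) → p ∧ (q ∨ AX A(q R p))` is not valid: it fails at some world of some
finite birelational model. -/
theorem stmt10 : ∃ (W Atom : Type) (_ : Finite W) (M : BiModel W Atom)
    (p q : Atom) (w : W),
    ¬ Sat M (ICTL.impl (ICTL.AR (ICTL.atom q) (ICTL.atom p))
      (ICTL.and (ICTL.atom p)
        (ICTL.or (ICTL.atom q)
          (ICTL.AX (ICTL.AR (ICTL.atom q) (ICTL.atom p)))))) w := by
  refine ⟨Wd, Bool, inferInstance, Mdl, true, false, Wd.w1, ?_⟩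
  intro h
  -- first, w1 satisfies A(q R p)
  have hAR : Sat Mdl (ICTL.AR (ICTL.atom false) (ICTL.atom true)) Wd.w1 := by
    intro w' hP ρ hpath h0
    have hw' : w' = Wd.w1 ∨ w' = Wd.v1 := by
      revert hP; cases w' <;> simp [Mdl, prB]
    rcases hw' with rfl | rfl
    · -- path from w1 : forced to be w1, w2, w2, ...
      right
      refine ⟨1, ?_, ?_⟩
      · rw [w1_path hpath h0 0]; simp [Sat, Mdl, vB]
      · intro i hi
        interval_cases i
        · rw [h0]; simp [Sat, Mdl, vB]
        · rw [w1_path hpath h0 0]; simp [Sat, Mdl, vB]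
    · -- path from v1 : stays in {v1, v2}, v1 as long as possible
      by_cases hall : ∀ i, ρ i = Wd.v1
      · left
        intro i; rw [hall i]; simp [Sat, Mdl, vB]
      · push_neg at hall
        have hex : ∃ i, ρ i ≠ Wd.v1 := hall
        right
        classical
        set k := Nat.find hex with hk
        have hkspec : ρ k ≠ Wd.v1 := Nat.find_spec hex
        have hlt : ∀ i < k, ρ i = Wd.v1 := by
          intro i hi
          by_contra hne
          have h2 : k ≤ i := hk ▸ Nat.find_le hne
          omega
        have hk1 : 1 ≤ k := by
          rcases Nat.eq_zero_or_pos k with h0' | h0'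
          · rw [h0'] at hkspec; exact absurd h0 hkspec
          · exact h0'
        refine ⟨k - 1, ?_, ?_⟩
        · rw [hlt (k - 1) (by omega)]; simp [Sat, Mdl, vB]
        · intro i hi
          rw [hlt i (by omega)]; simp [Sat, Mdl, vB]
  have hand := h Wd.w1 (by rfl) hAR
  rcases hand.2 with hq | hAX
  · -- q does not hold at w1
    simp [Sat, Mdl, vB] at hq
  · -- AX A(q R p) fails at w1: go up to v1, step to v2
    have hAR2 := hAX Wd.v1 (by rfl)
      (fun i => if i = 0 then Wd.v1 else Wd.v2) ?_ (by simp)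
    · -- A(q R p) fails at v2
      have := hAR2 Wd.v2 (by rfl) (fun _ => Wd.v2) (fun i => by rfl) rfl
      rcases this with hall | ⟨j, _, hle⟩
      · have := hall 0; simp [Sat, Mdl, vB] at this
      · have := hle 0 (Nat.zero_le j); simp [Sat, Mdl, vB] at this
    · intro i
      rcases Nat.eq_zero_or_pos i with rfl | hi
      · show rB _ _ = true; rfl
      · simp only [Nat.pos_iff_ne_zero] at hi
        simp [hi, Mdl, rB]
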